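/- Let X be a zero-dimensional compact Hausdorff space. A homeomorphism h ∈ H(X) is chain transitive if and only if for every clopen set A ⊆ X with A ≠ ∅ and A ≠ X, we have h[A] ⊄ A. -/

import Mathlib

open Set TopologicalSpace

noncomputable section

def ChainTransitive {X : Type*} [TopologicalSpace X] (h : X → X) : Prop :=
  ∀ a b : X, ∀ 𝒰 : Set (Set X), (∀ U ∈ 𝒰, IsOpen U) → ⋃₀ 𝒰 = univ →
    ∃ n : ℕ, 1 ≤ n ∧ ∃ x : ℕ → X, x 0 = a ∧ x n = b ∧
      ∀ i < n, ∃ U ∈ 𝒰, h (x i) ∈ U ∧ x (i + 1) ∈ U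

theorem stmt_6 (X : Type*) [TopologicalSpace X] [CompactSpace X] [T2Space X]
    [TotallyDisconnectedSpace X] (h : X ≃ₜ X) :
    ChainTransitive ⇑h ↔
      ∀ A : Set X, IsClopen A → A ≠ ∅ → A ≠ univ → ¬(⇑h '' A ⊆ A) := by
  constructor
  · intro hct A hA hne hnuniv hsub
    obtain ⟨a, ha⟩ := nonempty_iff_ne_empty.2 hne
    obtain ⟨b, hb⟩ : Aᶜ.Nonempty := by
      rw [nonempty_compl]; exact hnuniv
    obtain ⟨n, hn1, x, hx0, hxn, hstep⟩ := hct a b {A, Aᶜ}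
      (by rintro U (rfl | rfl); exacts [hA.2, hA.1.isOpen_compl])
      (by simp [sUnion_pair, union_compl_self])
    have key : ∀ i ≤ n, x i ∈ A := by
      intro i hi
      induction i with
      | zero => rw [hx0]; exact ha
      | succ k ih =>
        have hk : x k ∈ A := ih (by omega)
        obtain ⟨U, hU, hhU, hxU⟩ := hstep k (by omega)
        rcases hU with rfl | rfl
        · exact hxU
        · exact absurd (hsub ⟨x k, hk, rfl⟩) hhU
    exact hb (by rw [← hxn]; exact key n le_rfl)
  · intro H a b 𝒰 hopen hcov
    classical
    have hW : ∀ x : X, ∃ W : Set X, IsClopen W ∧ x ∈ W ∧ ∃ U ∈ 𝒰, W ⊆ U := by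
      intro x
      have : x ∈ ⋃₀ 𝒰 := by rw [hcov]; trivial
      obtain ⟨U, hU, hxU⟩ := this
      obtain ⟨V, hV, hxV, hVU⟩ := compact_exists_isClopen_in_isOpen (hopen U hU) hxU
      exact ⟨V, hV, hxV, U, hU, hVU⟩
    choose W hWclopen hWmem hWsub using hW
    obtain ⟨t, ht⟩ := isCompact_univ.elim_finite_subcover W
      (fun x => (hWclopen x).2) (fun x _ => mem_iUnion.2 ⟨x, hWmem x⟩)
    have hcov' : ∀ y : X, ∃ p ∈ t, y ∈ W p := by
      intro y
      have := ht (mem_univ y)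
      simpa using this
    set r : X → X → Prop := fun p q => ∃ y ∈ W p, h y ∈ W q with hr
    have chainOf : ∀ p q : X, Relation.ReflTransGen r p q → h a ∈ W p →
        ∃ n : ℕ, ∃ x : ℕ → X, x 0 = a ∧ h (x n) ∈ W q ∧
          ∀ i < n, ∃ U ∈ 𝒰, h (x i) ∈ U ∧ x (i + 1) ∈ U := by
      intro p q hpq hap
      induction hpq with
      | refl => exact ⟨0, fun _ => a, rfl, hap, by omega⟩
      | tail _ hlast ih =>
        rename_i q' q'' _
        obtain ⟨n, x, hx0, hxn, hstep⟩ := ih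
        obtain ⟨y, hy, hhy⟩ := hlast
        refine ⟨n + 1, fun i => if i = n + 1 then y else x i, by simp [hx0], by simp [hhy], ?_⟩
        intro i hi
        rcases Nat.lt_or_ge i n with hin | hin
        · obtain ⟨U, hU, h1, h2⟩ := hstep i hin
          have e1 : i ≠ n + 1 := by omega
          have e2 : i + 1 ≠ n + 1 := by omega
          exact ⟨U, hU, by simp [e1, h1], by simp [e2, h2, show i ≠ n by omega]⟩
        · have hi' : i = n := by omega
          obtain ⟨U, hU, hsubU⟩ := hWsub q'
          have e1 : i ≠ n + 1 := by omega
          exact ⟨U, hU, by simpa [e1, hi'] using hsubU hxn, by simp [hi', hsubU hy]⟩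
    set S : Set X := {q | q ∈ t ∧ ∃ p ∈ t, h a ∈ W p ∧ Relation.ReflTransGen r p q} with hS
    set A : Set X := ⋃ q ∈ (t.filter (· ∈ S) : Finset X), W q with hA
    have hAclopen : IsClopen A := isClopen_biUnion_finset fun q _ => hWclopen q
    obtain ⟨p0, hp0t, hp0⟩ := hcov' (h a)
    have hp0S : p0 ∈ S := ⟨hp0t, p0, hp0t, hp0, Relation.ReflTransGen.refl⟩
    have memA : ∀ q, q ∈ S → ∀ z ∈ W q, z ∈ A := by
      intro q hqS z hz
      exact mem_biUnion (Finset.mem_filter.2 ⟨hqS.1, hqS⟩) hz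
    have hAne : A ≠ ∅ := nonempty_iff_ne_empty.1 ⟨h a, memA p0 hp0S _ hp0⟩
    have hsubA : ⇑h '' A ⊆ A := by
      rintro _ ⟨z, hz, rfl⟩
      simp only [hA, Set.mem_iUnion, exists_prop] at hz
      obtain ⟨q, hq, hzq⟩ := hz
      have hqS : q ∈ S := (Finset.mem_filter.1 hq).2
      obtain ⟨l, hlt, hl⟩ := hcov' (h z)
      have hlS : l ∈ S := by
        obtain ⟨hqt, p, hpt, hap, hreach⟩ := hqS
        exact ⟨hlt, p, hpt, hap, hreach.tail ⟨z, hzq, hl⟩⟩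
      exact memA l hlS _ hl
    have hAuniv : A = univ := by
      by_contra hne
      exact H A hAclopen hAne hne hsubA
    have hbA : b ∈ A := hAuniv ▸ mem_univ b
    simp only [hA, Set.mem_iUnion, exists_prop] at hbA
    obtain ⟨q, hq, hbq⟩ := hbA
    obtain ⟨_, p, hpt, hap, hreach⟩ := (Finset.mem_filter.1 hq).2
    obtain ⟨n, x, hx0, hxn, hstep⟩ := chainOf p q hreach hap
    obtain ⟨U, hU, hsubU⟩ := hWsub q
    refine ⟨n + 1, by omega, fun i => if i = n + 1 then b else x i, by simp [hx0],
      by simp, ?_⟩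
    intro i hi
    rcases Nat.lt_or_ge i n with hin | hin
    · obtain ⟨U', hU', h1, h2⟩ := hstep i hin
      have e1 : i ≠ n + 1 := by omega
      have e2 : i + 1 ≠ n + 1 := by omega
      exact ⟨U', hU', by simp [e1, h1], by simp [e2, h2, show i ≠ n by omega]⟩
    · have hi' : i = n := by omega
      have e1 : i ≠ n + 1 := by omega
      exact ⟨U, hU, by simpa [e1, hi'] using hsubU hxn, by simp [hi', hsubU hbq]⟩
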